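/- Let 𝒮𝒢^g be the golden ratio Sierpinski gasket. Then 𝒮𝒢^g does not satisfy the finite chain length property: the supremum L(𝒮𝒢^g) of the lengths of overlapping chains in 𝒮𝒢^g is infinite; moreover, for every 0 < δ < 1 the supremum L_δ(𝒮𝒢^g) of the lengths of δ-overlapping chains is infinite. -/

import Mathlib

open Set

noncomputable section

/-- Points of `ℝ^d`. -/
abbrev Pt (d : ℕ) := EuclideanSpace ℝ (Fin d)

/-- `f` is a similitude: it scales all distances by some ratio `r > 0`. -/
def IsSimilitude {d : ℕ} (f : Pt d → Pt d) : Prop :=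
  ∃ r : ℝ, 0 < r ∧ ∀ x y, dist (f x) (f y) = r * dist x y

/-- `F_w = F_{w_1} ∘ ⋯ ∘ F_{w_m}` for a word `w = w_1⋯w_m`. -/
def Fword {α : Type*} {N : ℕ} (F : Fin N → α → α) : List (Fin N) → α → α
  | [] => id
  | i :: w => F i ∘ Fword F w

/-- `c_w = c_{w_1}⋯c_{w_m}`, the similarity ratio of `F_w`. -/
def cword {N : ℕ} (c : Fin N → ℝ) (w : List (Fin N)) : ℝ := (w.map c).prod

/-- `(F_{w^{(1)}}K, …, F_{w^{(m)}}K)` (encoded by the words `w 0, …, w (m-1)`) is an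
overlapping chain: the copies are distinct, none is contained in another, and each
`F_{w^{(i+1)}}K` has infinite intersection with the union of the preceding copies. -/
def IsOverlapChain {α : Type*} {N : ℕ} (F : Fin N → α → α) (K : Set α)
    (m : ℕ) (w : ℕ → List (Fin N)) : Prop :=
  (∀ i < m, ∀ j < m, i ≠ j → Fword F (w i) '' K ≠ Fword F (w j) '' K) ∧
  (∀ i < m, ∀ j < m, i ≠ j → ¬ Fword F (w i) '' K ⊆ Fword F (w j) '' K) ∧
  (∀ i : ℕ, i + 1 < m →
    ((Fword F (w (i + 1)) '' K) ∩ ⋃ j ∈ Finset.range (i + 1), Fword F (w j) '' K).Infinite)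

/-- A `δ`-overlapping chain: an overlapping chain all of whose members have comparable
similarity ratios: `δ ≤ c_{w^{(i)}}/c_{w^{(j)}} ≤ 1/δ`. -/
def IsDeltaChain {α : Type*} {N : ℕ} (F : Fin N → α → α) (c : Fin N → ℝ) (K : Set α)
    (δ : ℝ) (m : ℕ) (w : ℕ → List (Fin N)) : Prop :=
  IsOverlapChain F K m w ∧
  ∀ i < m, ∀ j < m,
    δ ≤ cword c (w i) / cword c (w j) ∧ cword c (w i) / cword c (w j) ≤ 1 / δ

/-- The golden ratio `ρ = (√5 − 1)/2`. -/
def grho : ℝ := (Real.sqrt 5 - 1) / 2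

/-- The IFS of the golden ratio Sierpinski gasket on the triangle with vertices
`q 0, q 1, q 2`: `F_1(x) = ρ²(x−q_1)+q_1`, `F_i(x) = ρ(x−q_i)+q_i` for `i = 2,3`. -/
def gF (q : Fin 3 → Pt 2) : Fin 3 → Pt 2 → Pt 2 :=
  fun i x => (![grho ^ 2, grho, grho] i) • (x - q i) + q i

/-- The similarity ratios of the IFS of the golden ratio Sierpinski gasket. -/
def gc : Fin 3 → ℝ := ![grho ^ 2, grho, grho]

namespace Aux17

/-! ### Arithmetic facts about the golden ratio -/

lemma grho_sq : grho ^ 2 = 1 - grho := by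
  have h : Real.sqrt 5 ^ 2 = 5 := Real.sq_sqrt (by norm_num)
  unfold grho; nlinarith [h]

lemma grho_pos : 0 < grho := by
  have h : (1:ℝ) < Real.sqrt 5 := by
    have := Real.lt_sqrt (x := 1) (y := 5) (by norm_num)
    simpa using this.mpr (by norm_num)
  unfold grho; linarith

lemma grho_lt_one : grho < 1 := by
  have h : Real.sqrt 5 < 3 := by
    have : Real.sqrt 5 < Real.sqrt 9 := Real.sqrt_lt_sqrt (by norm_num) (by norm_num)
    simpa [show (9:ℝ) = 3^2 by norm_num, Real.sqrt_eq_iff_eq_sq] using this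
  unfold grho; linarith

/-! ### The chain of words -/

def Dlist : ℕ → List (List (Fin 3))
  | 0 => [[]]
  | 1 => [[1],[2]]
  | (n+2) => ((Dlist n).map (fun w => 1 :: 2 :: w)) ++ ((Dlist (n+1)).map (fun w => 2 :: w))

def tword : ℕ → List (Fin 3)
  | 0 => []
  | 1 => [1]
  | (n+2) => 1 :: 2 :: tword n

lemma Dlist_ne_nil (n : ℕ) : Dlist n ≠ [] := by
  match n with
  | 0 => simp [Dlist]
  | 1 => simp [Dlist]
  | (k+2) =>
    simp only [Dlist]
    intro h
    rcases List.append_eq_nil_iff.mp h with ⟨-, h2⟩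
    exact Dlist_ne_nil (k+1) (List.map_eq_nil_iff.mp h2)

lemma Dlist_length (n : ℕ) : n + 1 ≤ (Dlist n).length := by
  match n with
  | 0 => simp [Dlist]
  | 1 => simp [Dlist]
  | (k+2) =>
    have h1 := Dlist_length k
    have h2 := Dlist_length (k+1)
    simp only [Dlist, List.length_append, List.length_map]
    omega

lemma Dlist_mem {n : ℕ} {w : List (Fin 3)} (hw : w ∈ Dlist n) :
    w.length = n ∧ ∀ a ∈ w, a = 1 ∨ a = 2 := by
  match n with
  | 0 =>
    simp [Dlist] at hw
    subst hw; simp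
  | 1 =>
    simp [Dlist] at hw
    rcases hw with h | h <;> subst h <;> simp
  | (k+2) =>
    simp only [Dlist, List.mem_append, List.mem_map] at hw
    rcases hw with ⟨v, hv, rfl⟩ | ⟨v, hv, rfl⟩
    · obtain ⟨hl, ha⟩ := Dlist_mem hv
      refine ⟨by simp [hl], ?_⟩
      intro a ha'
      rcases ha' with _ | ⟨_, h⟩
      · left; rfl
      · rcases h with _ | ⟨_, h⟩
        · right; rfl
        · exact ha a (by assumption)
    · obtain ⟨hl, ha⟩ := Dlist_mem hv
      refine ⟨by simp [hl], ?_⟩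
      intro a ha'
      rcases ha' with _ | ⟨_, h⟩
      · right; rfl
      · exact ha a (by assumption)

lemma Dlist_head (n : ℕ) : (Dlist n).head? = some (tword n) := by
  match n with
  | 0 => simp [Dlist, tword]
  | 1 => simp [Dlist, tword]
  | (k+2) =>
    have h := Dlist_head k
    simp only [Dlist, tword, List.head?_append, List.head?_map, h, Option.map_some]
    rfl

lemma Dlist_getLast (n : ℕ) : (Dlist n).getLast? = some (List.replicate n 2) := by
  match n with
  | 0 => simp [Dlist]
  | 1 => simp [Dlist, List.replicate]
  | (k+2) =>
    have h := Dlist_getLast (k+1)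
    simp only [Dlist, List.getLast?_append, List.getLast?_map, h, Option.map_some]
    simp [List.replicate_succ]

/-! ### The linking relation, abstractly -/

variable {α : Type*} (F : Fin 3 → α → α)

/-- The linking relation: the words `A ++ [2]` and `B ++ [1]`, or `A ++ [2,2]` and
`B ++ [1,1]`, induce the same map; hence the copies of `A` and `B` share a common
sub-copy. -/
def LinkR (A B : List (Fin 3)) : Prop :=
  Fword F A ∘ F 2 = Fword F B ∘ F 1 ∨
  Fword F A ∘ (F 2 ∘ F 2) = Fword F B ∘ (F 1 ∘ F 1)

lemma LinkR_cons {A B : List (Fin 3)} (i : Fin 3) (h : LinkR F A B) :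
    LinkR F (i :: A) (i :: B) := by
  rcases h with h | h
  · left
    show (F i ∘ Fword F A) ∘ F 2 = (F i ∘ Fword F B) ∘ F 1
    simp only [Function.comp_assoc, h]
  · right
    show (F i ∘ Fword F A) ∘ (F 2 ∘ F 2) = (F i ∘ Fword F B) ∘ (F 1 ∘ F 1)
    simp only [Function.comp_assoc, h]

variable (hrel : F 1 ∘ (F 2 ∘ F 2) = F 2 ∘ (F 1 ∘ F 1))

lemma shuffle (j : ℕ) : (F 2 ∘ F 1)^[j] ∘ F 2 = F 2 ∘ (F 1 ∘ F 2)^[j] := by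
  induction j with
  | zero => simp
  | succ j ih =>
    rw [Function.iterate_succ']
    calc (((F 2 ∘ F 1) ∘ (F 2 ∘ F 1)^[j])) ∘ F 2
        = (F 2 ∘ F 1) ∘ ((F 2 ∘ F 1)^[j] ∘ F 2) := by simp [Function.comp_assoc]
      _ = (F 2 ∘ F 1) ∘ (F 2 ∘ (F 1 ∘ F 2)^[j]) := by rw [ih]
      _ = F 2 ∘ ((F 1 ∘ F 2) ∘ (F 1 ∘ F 2)^[j]) := by simp [Function.comp_assoc]
      _ = F 2 ∘ (F 1 ∘ F 2)^[j+1] := by rw [← Function.iterate_succ']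

include hrel in
lemma identE (j : ℕ) : F 1 ∘ (F 2)^[2*j] = (F 2 ∘ F 1)^[j] ∘ F 1 := by
  induction j with
  | zero => simp
  | succ j ih =>
    have h2 : 2 * (j+1) = 2*j + 1 + 1 := by ring
    rw [h2, Function.iterate_succ, Function.iterate_succ]
    calc F 1 ∘ (((F 2)^[2*j] ∘ F 2) ∘ F 2)
        = (F 1 ∘ (F 2)^[2*j]) ∘ (F 2 ∘ F 2) := by simp [Function.comp_assoc]
      _ = ((F 2 ∘ F 1)^[j] ∘ F 1) ∘ (F 2 ∘ F 2) := by rw [ih]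
      _ = (F 2 ∘ F 1)^[j] ∘ (F 1 ∘ (F 2 ∘ F 2)) := by simp [Function.comp_assoc]
      _ = (F 2 ∘ F 1)^[j] ∘ (F 2 ∘ (F 1 ∘ F 1)) := by rw [hrel]
      _ = ((F 2 ∘ F 1)^[j] ∘ (F 2 ∘ F 1)) ∘ F 1 := by simp [Function.comp_assoc]
      _ = (F 2 ∘ F 1)^[j+1] ∘ F 1 := by rw [← Function.iterate_succ]

lemma Fword_replicate (k : ℕ) : Fword F (List.replicate k 2) = (F 2)^[k] := by
  induction k with
  | zero => rfl
  | succ k ih =>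
    rw [List.replicate_succ, Function.iterate_succ']
    show F 2 ∘ Fword F (List.replicate k 2) = _
    rw [ih]

lemma Fword_tword_even (j : ℕ) : Fword F (tword (2*j)) = (F 1 ∘ F 2)^[j] := by
  induction j with
  | zero => rfl
  | succ j ih =>
    have h2 : 2 * (j+1) = 2*j + 2 := by ring
    rw [h2, Function.iterate_succ']
    show F 1 ∘ (F 2 ∘ Fword F (tword (2*j))) = _
    rw [ih, Function.comp_assoc]

lemma Fword_tword_odd (j : ℕ) : Fword F (tword (2*j+1)) = (F 1 ∘ F 2)^[j] ∘ F 1 := by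
  induction j with
  | zero => simp [tword, Fword]
  | succ j ih =>
    have h2 : 2 * (j+1) + 1 = (2*j+1) + 2 := by ring
    rw [h2, Function.iterate_succ']
    show F 1 ∘ (F 2 ∘ Fword F (tword (2*j+1))) = _
    rw [ih]
    simp [Function.comp_assoc]

include hrel in
lemma Jlemma (k : ℕ) : LinkR F (1 :: List.replicate k 2) (2 :: tword k) := by
  have base : ∀ j : ℕ, F 1 ∘ (F 2)^[2*(j+1)] = (F 2 ∘ F 1)^[j] ∘ (F 2 ∘ (F 1 ∘ F 1)) := by
    intro j
    rw [identE F hrel (j+1), Function.iterate_succ]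
    simp [Function.comp_assoc]
  rcases Nat.even_or_odd k with ⟨j, hj⟩ | ⟨j, hj⟩
  · subst hj
    right
    show (F 1 ∘ Fword F (List.replicate (j+j) 2)) ∘ (F 2 ∘ F 2)
        = (F 2 ∘ Fword F (tword (j+j))) ∘ (F 1 ∘ F 1)
    have hjj : j + j = 2*j := by ring
    rw [hjj, Fword_replicate, Fword_tword_even]
    calc (F 1 ∘ (F 2)^[2*j]) ∘ (F 2 ∘ F 2)
        = F 1 ∘ (F 2)^[2*(j+1)] := by
          have : (2:ℕ)*(j+1) = 2*j + 1 + 1 := by ring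
          rw [this, Function.iterate_succ, Function.iterate_succ]
          simp [Function.comp_assoc]
      _ = (F 2 ∘ F 1)^[j] ∘ (F 2 ∘ (F 1 ∘ F 1)) := base j
      _ = ((F 2 ∘ F 1)^[j] ∘ F 2) ∘ (F 1 ∘ F 1) := by simp [Function.comp_assoc]
      _ = (F 2 ∘ (F 1 ∘ F 2)^[j]) ∘ (F 1 ∘ F 1) := by rw [shuffle]
  · subst hj
    left
    show (F 1 ∘ Fword F (List.replicate (2*j+1) 2)) ∘ F 2
        = (F 2 ∘ Fword F (tword (2*j+1))) ∘ F 1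
    rw [Fword_replicate, Fword_tword_odd]
    calc (F 1 ∘ (F 2)^[2*j+1]) ∘ F 2
        = F 1 ∘ (F 2)^[2*(j+1)] := by
          have : (2:ℕ)*(j+1) = 2*j + 1 + 1 := by ring
          rw [this, Function.iterate_succ]
          simp [Function.comp_assoc]
      _ = (F 2 ∘ F 1)^[j] ∘ (F 2 ∘ (F 1 ∘ F 1)) := base j
      _ = ((F 2 ∘ F 1)^[j] ∘ F 2) ∘ (F 1 ∘ F 1) := by simp [Function.comp_assoc]
      _ = (F 2 ∘ (F 1 ∘ F 2)^[j]) ∘ (F 1 ∘ F 1) := by rw [shuffle]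
      _ = (F 2 ∘ ((F 1 ∘ F 2)^[j] ∘ F 1)) ∘ F 1 := by simp [Function.comp_assoc]

include hrel in
lemma chain_Dlist (n : ℕ) : List.Chain' (LinkR F) (Dlist n) := by
  match n with
  | 0 => exact List.isChain_singleton _
  | 1 =>
    simp only [Dlist]
    refine List.isChain_pair.mpr ?_
    have := Jlemma F hrel 0
    simpa [tword, List.replicate] using this
  | (k+2) =>
    have h1 := chain_Dlist k
    have h2 := chain_Dlist (k+1)
    simp only [Dlist]
    unfold List.Chain' at h1 h2 ⊢; rw [List.isChain_append]
    refine ⟨?_, ?_, ?_⟩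
    · exact (List.isChain_map _).mpr (h1.imp (fun a b h => by
        exact LinkR_cons F 1 (LinkR_cons F 2 h)))
    · exact (List.isChain_map _).mpr (h2.imp (fun a b h => LinkR_cons F 2 h))
    · intro x hx y hy
      rw [List.getLast?_map, Dlist_getLast, Option.map_some] at hx
      rw [List.head?_map, Dlist_head, Option.map_some] at hy
      cases hx; cases hy
      have := Jlemma F hrel (k+1)
      simpa [List.replicate_succ] using this

/-! ### Geometric facts -/

variable (q : Fin 3 → Pt 2)

lemma gF_one (x : Pt 2) : gF q 1 x = grho • (x - q 1) + q 1 := by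
  simp [gF]

lemma gF_two (x : Pt 2) : gF q 2 x = grho • (x - q 2) + q 2 := by
  simp [gF]

lemma gF_rel : gF q 1 ∘ (gF q 2 ∘ gF q 2) = gF q 2 ∘ (gF q 1 ∘ gF q 1) := by
  have h := grho_sq
  funext x
  simp only [Function.comp_apply, gF_one, gF_two]
  match_scalars
  · ring
  · linear_combination (1 - grho) * h
  · linear_combination (grho - 1) * h

lemma gF_fix (i : Fin 3) : gF q i (q i) = q i := by
  simp [gF]

lemma gF_sub {i : Fin 3} (hi : i = 1 ∨ i = 2) (x y : Pt 2) :
    gF q i x - gF q i y = grho • (x - y) := by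
  rcases hi with rfl | rfl <;>
    simp only [gF_one, gF_two] <;> module

lemma gF_inj {i : Fin 3} (hi : i = 1 ∨ i = 2) : Function.Injective (gF q i) := by
  intro x y hxy
  have h := gF_sub q hi x y
  rw [hxy, sub_self] at h
  have h2 : x - y = 0 := by
    rcases smul_eq_zero.mp h.symm with h3 | h3
    · exact absurd h3 (ne_of_gt grho_pos)
    · exact h3
  exact sub_eq_zero.mp h2

lemma Fword_sub {A : List (Fin 3)} (hA : ∀ a ∈ A, a = 1 ∨ a = 2) (x y : Pt 2) :
    Fword (gF q) A x - Fword (gF q) A y = grho ^ A.length • (x - y) := by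
  induction A with
  | nil => simp [Fword]
  | cons i A ih =>
    have hi : i = 1 ∨ i = 2 := hA i (by simp)
    have hA' : ∀ a ∈ A, a = 1 ∨ a = 2 := fun a ha => hA a (by simp [ha])
    show gF q i (Fword (gF q) A x) - gF q i (Fword (gF q) A y) = _
    rw [gF_sub q hi, ih hA', smul_smul, List.length_cons, pow_succ]
    ring_nf

lemma Fword_inj {A : List (Fin 3)} (hA : ∀ a ∈ A, a = 1 ∨ a = 2) :
    Function.Injective (Fword (gF q) A) := by
  intro x y hxy
  have h := Fword_sub q hA x y
  rw [hxy, sub_self] at h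
  have h2 : x - y = 0 := by
    rcases smul_eq_zero.mp h.symm with h3 | h3
    · exact absurd h3 (ne_of_gt (pow_pos grho_pos _))
    · exact h3
  exact sub_eq_zero.mp h2

lemma cword_letters {A : List (Fin 3)} (hA : ∀ a ∈ A, a = 1 ∨ a = 2) :
    cword gc A = grho ^ A.length := by
  induction A with
  | nil => simp [cword]
  | cons i A ih =>
    have hi : i = 1 ∨ i = 2 := hA i (by simp)
    have hA' : ∀ a ∈ A, a = 1 ∨ a = 2 := fun a ha => hA a (by simp [ha])
    have hgci : gc i = grho := by rcases hi with rfl | rfl <;> simp [gc]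
    show (List.map gc (i :: A)).prod = _
    rw [List.map_cons, List.prod_cons, hgci]
    show grho * cword gc A = _
    rw [ih hA', List.length_cons, pow_succ]
    ring

lemma no_translate {K : Set (Pt 2)} (hKc : IsCompact K) {v : Pt 2} (hv : v ≠ 0)
    (h : ∀ x ∈ K, x + v ∈ K) (hKne : K.Nonempty) : False := by
  obtain ⟨x₀, hx₀K, hmax⟩ := hKc.exists_isMaxOn hKne
    (Continuous.continuousOn
      ((continuous_id.inner continuous_const : Continuous (fun x : Pt 2 => (inner ℝ x v : ℝ)))))
  have h1 := hmax (h x₀ hx₀K)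
  simp only [Set.mem_setOf_eq, id_eq] at h1
  rw [inner_add_left] at h1
  have h2 : (0:ℝ) < inner ℝ v v := by
    rw [real_inner_self_eq_norm_sq]
    exact pow_pos (norm_pos_iff.mpr hv) 2
  linarith

end Aux17


/-- **Appendix, Example 1.** The golden ratio Sierpinski gasket `𝒮𝒢^g` (built on any
nondegenerate equilateral triangle `q 0, q 1, q 2` in `ℝ²`) does not satisfy the finite
chain length property: overlapping chains of arbitrarily large length exist; moreover,
for every `0 < δ < 1` there are `δ`-overlapping chains of arbitrarily large length. -/
theorem stmt17 (q : Fin 3 → Pt 2)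
    (heq1 : dist (q 0) (q 1) = dist (q 1) (q 2))
    (heq2 : dist (q 0) (q 2) = dist (q 1) (q 2))
    (hpos : 0 < dist (q 0) (q 1))
    (K : Set (Pt 2)) (hKc : IsCompact K) (hKne : K.Nonempty)
    (hself : K = ⋃ i, gF q i '' K) :
    (∀ L : ℕ, ∃ (m : ℕ) (w : ℕ → List (Fin 3)),
        IsOverlapChain (gF q) K m w ∧ L < m) ∧
    (∀ δ : ℝ, 0 < δ → δ < 1 → ∀ L : ℕ, ∃ (m : ℕ) (w : ℕ → List (Fin 3)),
        IsDeltaChain (gF q) gc K δ m w ∧ L < m) := by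
  classical
  have hρ0 := Aux17.grho_pos
  have hρ1 := Aux17.grho_lt_one
  have hrel := Aux17.gF_rel q
  have hsub : ∀ i : Fin 3, gF q i '' K ⊆ K := by
    intro i
    conv_rhs => rw [hself]
    exact subset_iUnion (fun i => gF q i '' K) i
  have hdisti : ∀ i : Fin 3, (i = 1 ∨ i = 2) → ∀ x : Pt 2,
      dist (gF q i x) (q i) = grho * dist x (q i) := by
    intro i hi x
    have h := Aux17.gF_sub q hi x (q i)
    rw [Aux17.gF_fix q i] at h
    rw [dist_eq_norm, dist_eq_norm, h, norm_smul, Real.norm_eq_abs, abs_of_pos hρ0]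
  have hiterdist : ∀ (i : Fin 3), (i = 1 ∨ i = 2) → ∀ (x : Pt 2) (k : ℕ),
      dist ((gF q i)^[k] x) (q i) = grho ^ k * dist x (q i) := by
    intro i hi x k
    induction k with
    | zero => simp
    | succ k ih =>
      rw [Function.iterate_succ_apply', hdisti i hi, ih, pow_succ]
      ring
  have hitermem : ∀ (i : Fin 3) (x : Pt 2), x ∈ K → ∀ k : ℕ, (gF q i)^[k] x ∈ K := by
    intro i x hx k
    induction k with
    | zero => simpa
    | succ k ih =>
      rw [Function.iterate_succ_apply']
      exact hsub i ⟨_, ih, rfl⟩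
  have hqK : ∀ i : Fin 3, (i = 1 ∨ i = 2) → q i ∈ K := by
    intro i hi
    obtain ⟨x₀, hx₀⟩ := hKne
    have htend : Filter.Tendsto (fun k => (gF q i)^[k] x₀) Filter.atTop (nhds (q i)) := by
      rw [tendsto_iff_dist_tendsto_zero]
      have heq : (fun k => dist ((gF q i)^[k] x₀) (q i))
          = fun k => grho ^ k * dist x₀ (q i) := funext (hiterdist i hi x₀)
      rw [heq]
      have := (tendsto_pow_atTop_nhds_zero_of_lt_one (le_of_lt hρ0) hρ1).mul_const
        (dist x₀ (q i))
      simpa using this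
    exact hKc.isClosed.mem_of_tendsto htend (Filter.Eventually.of_forall
      (hitermem i x₀ hx₀))
  have hd12 : 0 < dist (q 2) (q 1) := by
    rw [dist_comm]; exact heq1 ▸ hpos
  have hq21 : q 2 ≠ q 1 := by
    intro h
    rw [h] at hd12
    simp at hd12
  have hKinf : K.Infinite := by
    refine Set.infinite_of_injective_forall_mem
      (f := fun k : ℕ => (gF q 1)^[k] (q 2)) ?_ ?_
    · intro a b hab
      have hab' : (gF q 1)^[a] (q 2) = (gF q 1)^[b] (q 2) := hab
      have ha := hiterdist 1 (Or.inl rfl) (q 2) a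
      have hb := hiterdist 1 (Or.inl rfl) (q 2) b
      rw [hab', hb] at ha
      have hpow : grho ^ b = grho ^ a :=
        mul_right_cancel₀ (ne_of_gt hd12) ha
      by_contra hne
      rcases Nat.lt_or_ge a b with h | h
      · exact absurd hpow (ne_of_lt (pow_lt_pow_right_of_lt_one₀ hρ0 hρ1 h))
      · have h' : b < a := by omega
        exact absurd hpow.symm (ne_of_lt (pow_lt_pow_right_of_lt_one₀ hρ0 hρ1 h'))
    · intro k
      exact hitermem 1 (q 2) (hqK 2 (Or.inr rfl)) k
  -- the master construction
  have key : ∀ L : ℕ, ∃ (m : ℕ) (w : ℕ → List (Fin 3)),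
      IsOverlapChain (gF q) K m w ∧ (∀ i, i < m → cword gc (w i) = grho ^ L) ∧ L < m := by
    intro L
    obtain ⟨l, hldef⟩ : ∃ l, l = Aux17.Dlist L := ⟨_, rfl⟩
    obtain ⟨m, hmdef⟩ : ∃ m, m = l.length := ⟨_, rfl⟩
    obtain ⟨w, hwdef⟩ : ∃ w : ℕ → List (Fin 3), w = fun j => l.getD j [] := ⟨_, rfl⟩
    have hLm : L < m := by
      rw [hmdef, hldef]
      exact Nat.lt_of_lt_of_le (Nat.lt_succ_self L) (Aux17.Dlist_length L)
    have hwmem : ∀ i, i < m → w i ∈ Aux17.Dlist L := by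
      intro i hi
      have hi' : i < l.length := by omega
      have hw : w i = l[i] := by rw [hwdef]; exact List.getD_eq_getElem l [] hi'
      rw [hw, ← hldef]
      exact List.getElem_mem hi'
    have hwlen : ∀ i, i < m → (w i).length = L :=
      fun i hi => (Aux17.Dlist_mem (hwmem i hi)).1
    have hwlet : ∀ i, i < m → ∀ a ∈ w i, a = 1 ∨ a = 2 :=
      fun i hi => (Aux17.Dlist_mem (hwmem i hi)).2
    have hchain := Aux17.chain_Dlist (gF q) hrel L
    have hlink : ∀ i, i + 1 < m → Aux17.LinkR (gF q) (w i) (w (i+1)) := by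
      intro i hi
      rw [← hldef] at hchain
      have h := List.isChain_iff_getElem.mp hchain i (by omega)
      have e1 : w i = l.get ⟨i, by omega⟩ := by
        rw [hwdef]
        exact List.getD_eq_getElem l [] (by omega)
      have e2 : w (i+1) = l.get ⟨i+1, by omega⟩ := by
        rw [hwdef]
        exact List.getD_eq_getElem l [] (by omega)
      rw [e1, e2]
      exact h
    -- the monotone functional
    set e : Pt 2 := q 2 - q 1 with hedef
    have hene : e ≠ 0 := sub_ne_zero.mpr hq21
    have hee : (0:ℝ) < inner ℝ e e := by
      rw [real_inner_self_eq_norm_sq]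
      exact pow_pos (norm_pos_iff.mpr hene) 2
    set μ : List (Fin 3) → ℝ := fun A => inner ℝ (Fword (gF q) A (q 1) - q 1) e with hμdef
    have hstep : ∀ i, i + 1 < m → μ (w i) < μ (w (i+1)) := by
      intro i hi
      have hlenA : (w i).length = L := hwlen i (by omega)
      have hletA := hwlet i (by omega)
      have hkey : ∃ c : ℝ, 0 < c ∧
          Fword (gF q) (w (i+1)) (q 1) - Fword (gF q) (w i) (q 1) = c • e := by
        rcases hlink i hi with h | h
        · refine ⟨grho ^ L * (1 - grho), mul_pos (pow_pos hρ0 L) (by linarith), ?_⟩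
          have h1 := congrFun h (q 1)
          simp only [Function.comp_apply] at h1
          rw [Aux17.gF_fix q 1] at h1
          have h2 := Aux17.Fword_sub q hletA (gF q 2 (q 1)) (q 1)
          rw [hlenA] at h2
          have h3 : gF q 2 (q 1) - q 1 = (1 - grho) • e := by
            rw [Aux17.gF_two, hedef]
            module
          rw [← h1, h2, h3, smul_smul]
        · have hgr2 : (1:ℝ) - grho ^ 2 = grho := by
            rw [Aux17.grho_sq]; ring
          refine ⟨grho ^ L * (1 - grho ^ 2), mul_pos (pow_pos hρ0 L) (by rw [hgr2]; exact hρ0), ?_⟩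
          have h1 := congrFun h (q 1)
          simp only [Function.comp_apply] at h1
          rw [Aux17.gF_fix q 1, Aux17.gF_fix q 1] at h1
          have h2 := Aux17.Fword_sub q hletA (gF q 2 (gF q 2 (q 1))) (q 1)
          rw [hlenA] at h2
          have h3 : gF q 2 (gF q 2 (q 1)) - q 1 = (1 - grho ^ 2) • e := by
            rw [Aux17.gF_two, Aux17.gF_two, hedef]
            match_scalars <;> ring
          rw [← h1, h2, h3, smul_smul]
      obtain ⟨c, hc, hkey⟩ := hkey
      have hdiff : μ (w (i+1)) - μ (w i)
          = inner ℝ (Fword (gF q) (w (i+1)) (q 1) - Fword (gF q) (w i) (q 1)) e := by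
        rw [hμdef]
        simp only
        rw [← inner_sub_left]
        congr 1
        abel
      have : μ (w (i+1)) - μ (w i) = c * inner ℝ e e := by
        rw [hdiff, hkey, real_inner_smul_left]
      nlinarith [mul_pos hc hee]
    have hmono : ∀ j, j < m → ∀ i, i < j → μ (w i) < μ (w j) := by
      intro j
      induction j with
      | zero => intro _ i hi; omega
      | succ j ih =>
        intro hj i hi
        rcases Nat.lt_succ_iff_lt_or_eq.mp hi with h | h
        · exact (ih (by omega) i h).trans (hstep j hj)
        · subst h
          exact hstep i hj
    have hμne : ∀ i j, i < m → j < m → i ≠ j →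
        Fword (gF q) (w i) (q 1) ≠ Fword (gF q) (w j) (q 1) := by
      intro i j hi hj hne heq
      have hμeq : μ (w i) = μ (w j) := by rw [hμdef]; simp only [heq]
      rcases Nat.lt_or_ge i j with h | h
      · exact absurd hμeq (ne_of_lt (hmono j hj i h))
      · have h' : j < i := by omega
        exact absurd hμeq.symm (ne_of_lt (hmono i hi j h'))
    have hnc : ∀ i, i < m → ∀ j, j < m → i ≠ j →
        ¬ (Fword (gF q) (w i) '' K ⊆ Fword (gF q) (w j) '' K) := by
      intro i hi j hj hne hsubset
      set v : Pt 2 := (grho ^ L)⁻¹ •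
        (Fword (gF q) (w i) (q 1) - Fword (gF q) (w j) (q 1)) with hvdef
      have hvne : v ≠ 0 :=
        smul_ne_zero (inv_ne_zero (pow_ne_zero _ (ne_of_gt hρ0)))
          (sub_ne_zero.mpr (hμne i j hi hj hne))
      have htr : ∀ x ∈ K, x + v ∈ K := by
        intro x hx
        obtain ⟨y, hyK, hy⟩ := hsubset ⟨x, hx, rfl⟩
        have h1 := Aux17.Fword_sub q (hwlet j hj) y x
        rw [hwlen j hj] at h1
        have hi1 := Aux17.Fword_sub q (hwlet i hi) x (q 1)
        rw [hwlen i hi] at hi1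
        have hj1 := Aux17.Fword_sub q (hwlet j hj) x (q 1)
        rw [hwlen j hj] at hj1
        have h2 : Fword (gF q) (w i) x - Fword (gF q) (w j) x
            = Fword (gF q) (w i) (q 1) - Fword (gF q) (w j) (q 1) := by
          calc Fword (gF q) (w i) x - Fword (gF q) (w j) x
              = (Fword (gF q) (w i) x - Fword (gF q) (w i) (q 1))
                - (Fword (gF q) (w j) x - Fword (gF q) (w j) (q 1))
                + (Fword (gF q) (w i) (q 1) - Fword (gF q) (w j) (q 1)) := by abel
            _ = grho ^ L • (x - q 1) - grho ^ L • (x - q 1)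
                + (Fword (gF q) (w i) (q 1) - Fword (gF q) (w j) (q 1)) := by
                  rw [hi1, hj1]
            _ = Fword (gF q) (w i) (q 1) - Fword (gF q) (w j) (q 1) := by abel
        have h3 : grho ^ L • (y - x)
            = Fword (gF q) (w i) (q 1) - Fword (gF q) (w j) (q 1) := by
          rw [← h2, ← h1, hy]
        have h4 : y - x = v := by
          rw [hvdef, ← h3, inv_smul_smul₀ (pow_ne_zero _ (ne_of_gt hρ0))]
        have h5 : y = x + v := by
          rw [← h4]; abel
        rw [← h5]
        exact hyK
      exact absurd hKne (fun hne' => Aux17.no_translate hKc hvne htr hne')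
    have hne' : ∀ i, i < m → ∀ j, j < m → i ≠ j →
        Fword (gF q) (w i) '' K ≠ Fword (gF q) (w j) '' K := by
      intro i hi j hj hne heq
      exact hnc i hi j hj hne (heq ▸ subset_rfl)
    have hinf : ∀ i : ℕ, i + 1 < m →
        ((Fword (gF q) (w (i + 1)) '' K)
          ∩ ⋃ j ∈ Finset.range (i + 1), Fword (gF q) (w j) '' K).Infinite := by
      intro i hi
      have hwiinj := Aux17.Fword_inj q (hwlet i (by omega))
      have hsubi : ∀ S : Set (Pt 2), S ⊆ Fword (gF q) (w i) '' K →
          S ⊆ ⋃ j ∈ Finset.range (i + 1), Fword (gF q) (w j) '' K := by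
        intro S hS
        refine hS.trans ?_
        intro x hx
        exact Set.mem_biUnion (Finset.self_mem_range_succ i) hx
      rcases hlink i hi with h | h
      · have hS1 : (Fword (gF q) (w i) ∘ gF q 2) '' K ⊆ Fword (gF q) (w i) '' K := by
          rw [Set.image_comp]
          exact Set.image_mono (hsub 2)
        have hS2 : (Fword (gF q) (w i) ∘ gF q 2) '' K ⊆ Fword (gF q) (w (i+1)) '' K := by
          rw [h, Set.image_comp]
          exact Set.image_mono (hsub 1)
        have hSinf : ((Fword (gF q) (w i) ∘ gF q 2) '' K).Infinite :=
          hKinf.image ((hwiinj.comp (Aux17.gF_inj q (Or.inr rfl))).injOn)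
        exact hSinf.mono (Set.subset_inter hS2 (hsubi _ hS1))
      · have hg2 : Function.Injective (gF q 2 ∘ gF q 2) :=
          (Aux17.gF_inj q (Or.inr rfl)).comp (Aux17.gF_inj q (Or.inr rfl))
        have hg2K : (gF q 2 ∘ gF q 2) '' K ⊆ K := by
          rw [Set.image_comp]
          exact (Set.image_mono (hsub 2)).trans (hsub 2)
        have hg1K : (gF q 1 ∘ gF q 1) '' K ⊆ K := by
          rw [Set.image_comp]
          exact (Set.image_mono (hsub 1)).trans (hsub 1)
        have hS1 : (Fword (gF q) (w i) ∘ (gF q 2 ∘ gF q 2)) '' K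
            ⊆ Fword (gF q) (w i) '' K := by
          rw [Set.image_comp]
          exact Set.image_mono hg2K
        have hS2 : (Fword (gF q) (w i) ∘ (gF q 2 ∘ gF q 2)) '' K
            ⊆ Fword (gF q) (w (i+1)) '' K := by
          rw [h, Set.image_comp]
          exact Set.image_mono hg1K
        have hSinf : ((Fword (gF q) (w i) ∘ (gF q 2 ∘ gF q 2)) '' K).Infinite :=
          hKinf.image ((hwiinj.comp hg2).injOn)
        exact hSinf.mono (Set.subset_inter hS2 (hsubi _ hS1))
    refine ⟨m, w, ⟨hne', hnc, hinf⟩, ?_, hLm⟩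
    intro i hi
    rw [Aux17.cword_letters (hwlet i hi), hwlen i hi]
  constructor
  · intro L
    obtain ⟨m, w, hover, -, hLm⟩ := key L
    exact ⟨m, w, hover, hLm⟩
  · intro δ hδ0 hδ1 L
    obtain ⟨m, w, hover, hcw, hLm⟩ := key L
    refine ⟨m, w, ⟨hover, ?_⟩, hLm⟩
    intro i hi j hj
    rw [hcw i hi, hcw j hj, div_self (ne_of_gt (pow_pos hρ0 L))]
    constructor
    · linarith
    · rw [le_div_iff₀ hδ0]
      linarith
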